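/- Let 𝒜 be an abelian category with enough projective objects and let 0 → M → X⁰ → X¹ → ⋯ → Xⁿ → 0 be an exact sequence in 𝒜 with n ≥ 0. Then there exist, for each 0 ≤ i ≤ n, an i-th syzygy Ω^i(X^i) of X^i such that M ∈ [Ωⁿ(Xⁿ)]₁ • [Ω^{n-1}(X^{n-1})]₁ • ⋯ • [Ω¹(X¹)]₁ • [X⁰]₁ ⊆ [⊕_{i=0}^{n} Ω^i(X^i)]_{n+1}. -/
import Mathlib


open CategoryTheory Limits

attribute [local instance] CategoryTheory.Limits.HasFiniteBiproducts.of_hasFiniteProducts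

noncomputable section

universe v u

variable {C : Type u} [Category.{v} C] [Abelian C]

/-- `add 𝒰`: the class of direct summands of finite direct sums of objects of `𝒰`. -/
def addClosure (S : Set C) : Set C :=
  {X | ∃ (n : ℕ) (g : Fin n → C), (∀ k, g k ∈ S) ∧
    ∃ (s : X ⟶ ⨁ g) (p : (⨁ g) ⟶ X), s ≫ p = 𝟙 X}

/-- The operation `𝒰₁ • 𝒰₂`. -/
def bulletOp (S T : Set C) : Set C :=
  addClosure {X | ∃ (U V : C) (_ : U ∈ S) (_ : V ∈ T) (f : U ⟶ X) (g : X ⟶ V)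
    (w : f ≫ g = 0), (ShortComplex.mk f g w).ShortExact}

/-- `[T]_n`. -/
def bracket (T : C) : ℕ → Set C
  | 0 => {X | IsZero X}
  | n + 1 => bulletOp (addClosure {T}) (bracket T n)

/-- The iterated product `f n • f (n-1) • ⋯ • f 0`. -/
def bigBullet (f : ℕ → Set C) : ℕ → Set C
  | 0 => f 0
  | n + 1 => bulletOp (f (n + 1)) (bigBullet f n)

/-- `K` is a syzygy of `X`. -/
def IsSyzygy (K X : C) : Prop :=
  ∃ (P : C) (ι : K ⟶ P) (π : P ⟶ X) (w : ι ≫ π = 0),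
    Projective P ∧ (ShortComplex.mk ι π w).ShortExact

/-- `K` is an `i`-th syzygy of `X` (a `0`-th syzygy of `X` is `X` itself). -/
def IsNthSyzygy : ℕ → C → C → Prop
  | 0, K, X => K = X
  | n + 1, K, X => ∃ Y : C, IsNthSyzygy n Y X ∧ IsSyzygy K Y

/-- `0 → X N → ⋯ → X 0 → 0` is exact. -/
def IsExactSeq (N : ℕ) (X : ℕ → C) (d : ∀ n : ℕ, X (n + 1) ⟶ X n) : Prop :=
  Mono (d (N - 1)) ∧ Epi (d 0) ∧
    ∀ i : ℕ, i + 2 ≤ N →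
      ∃ w : d (i + 1) ≫ d i = 0, (ShortComplex.mk (d (i + 1)) (d i) w).Exact

section AuxClosure

variable {S T : Set C} {A X Y Z : C}

lemma mem_addClosure_of_mem (h : X ∈ S) : X ∈ addClosure S :=
  ⟨1, fun _ => X, fun _ => h, biproduct.lift fun _ => 𝟙 X, biproduct.π _ 0,
    biproduct.lift_π _ _⟩

lemma summand_mem_addClosure (s : Y ⟶ X) (p : X ⟶ Y) (hsp : s ≫ p = 𝟙 Y)
    (hX : X ∈ addClosure S) : Y ∈ addClosure S := by
  obtain ⟨n, g, hg, s', p', h'⟩ := hX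
  refine ⟨n, g, hg, s ≫ s', p' ≫ p, ?_⟩
  rw [Category.assoc, ← Category.assoc s', h', Category.id_comp, hsp]

lemma iso_mem_addClosure (e : Y ≅ X) (hX : X ∈ addClosure S) : Y ∈ addClosure S :=
  summand_mem_addClosure e.hom e.inv e.hom_inv_id hX

lemma addClosure_mono (h : S ⊆ T) : addClosure S ⊆ addClosure T := by
  rintro X ⟨n, g, hg, s, p, hsp⟩
  exact ⟨n, g, fun k => h (hg k), s, p, hsp⟩

lemma addClosure_idem : addClosure (addClosure S) ⊆ addClosure S := by
  rintro X ⟨m, g, hg, s, p, hsp⟩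
  choose r h hh s' p' hsp' using hg
  let e := Fintype.equivFin (Σ k : Fin m, Fin (r k))
  let Φ : (⨁ fun k => ⨁ fun x => h k x) ≅
      ⨁ (fun j : Fin (Fintype.card (Σ k : Fin m, Fin (r k))) =>
        h (e.symm j).1 (e.symm j).2) :=
    biproductBiproductIso (fun k => Fin (r k)) (fun k x => h k x) ≪≫
      biproduct.whiskerEquiv e (fun p => eqToIso (by rw [Equiv.symm_apply_apply]))
  refine ⟨_, _, fun j => hh _ _,
    s ≫ biproduct.map s' ≫ Φ.hom, Φ.inv ≫ biproduct.map p' ≫ p, ?_⟩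
  have : biproduct.map s' ≫ biproduct.map p' = 𝟙 _ := by
    ext j
    simp [hsp']
  rw [Category.assoc, Category.assoc, Iso.hom_inv_id_assoc, ← Category.assoc (biproduct.map s'),
    this, Category.id_comp, hsp]

lemma addClosure_subset (h : S ⊆ addClosure T) : addClosure S ⊆ addClosure T :=
  fun _ hX => addClosure_idem (addClosure_mono h hX)

end AuxClosure
section SESTools

open ShortComplex

/-- Build a short exact sequence from "f is a kernel of g" plus mono f, epi g. -/
lemma shortExact_of_kernel {X₁ X₂ X₃ : C} (f : X₁ ⟶ X₂) (g : X₂ ⟶ X₃) (w : f ≫ g = 0)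
    [Mono f] [Epi g]
    (h : ∀ {A : C} (k : A ⟶ X₂), k ≫ g = 0 → ∃ l : A ⟶ X₁, l ≫ f = k) :
    (ShortComplex.mk f g w).ShortExact := by
  have hl : IsLimit (KernelFork.ofι f w) :=
    KernelFork.IsLimit.ofι' f w (fun k hk => ⟨(h k hk).choose, (h k hk).choose_spec⟩)
  exact ShortComplex.ShortExact.mk' ((ShortComplex.mk f g w).exact_of_f_is_kernel hl)
    inferInstance inferInstance

/-- Lift along the mono of a short exact sequence. -/
lemma sesLift {X₁ X₂ X₃ : C} {f : X₁ ⟶ X₂} {g : X₂ ⟶ X₃} {w : f ≫ g = 0}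
    (hse : (ShortComplex.mk f g w).ShortExact) {A : C} (k : A ⟶ X₂) (hk : k ≫ g = 0) :
    ∃ l : A ⟶ X₁, l ≫ f = k := by
  obtain ⟨l, hl⟩ := KernelFork.IsLimit.lift' hse.fIsKernel k hk
  exact ⟨l, hl⟩

lemma ses_comp_iso {X₁ X₂ X₃ X₃' : C} {f : X₁ ⟶ X₂} {g : X₂ ⟶ X₃} {w : f ≫ g = 0}
    (hse : (ShortComplex.mk f g w).ShortExact) (φ : X₃ ⟶ X₃') [IsIso φ] :
    (ShortComplex.mk f (g ≫ φ) (by rw [← Category.assoc, w, zero_comp])).ShortExact := by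
  refine ShortComplex.shortExact_of_iso (S₁ := ShortComplex.mk f g w) ?_ hse
  exact ShortComplex.isoMk (Iso.refl _) (Iso.refl _) (asIso φ) (by simp) (by simp)

lemma iso_comp_ses {X₁ X₁' X₂ X₃ : C} {f : X₁ ⟶ X₂} {g : X₂ ⟶ X₃} {w : f ≫ g = 0}
    (hse : (ShortComplex.mk f g w).ShortExact) (φ : X₁' ⟶ X₁) [IsIso φ] :
    (ShortComplex.mk (φ ≫ f) g (by rw [Category.assoc, w, comp_zero])).ShortExact := by
  refine ShortComplex.shortExact_of_iso (S₁ := ShortComplex.mk f g w) ?_ hse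
  exact ShortComplex.isoMk (asIso φ).symm (Iso.refl _) (Iso.refl _) (by simp) (by simp)

lemma ses_middle_iso {X₁ X₂ X₂' X₃ : C} {f : X₁ ⟶ X₂} {g : X₂ ⟶ X₃} {w : f ≫ g = 0}
    (hse : (ShortComplex.mk f g w).ShortExact) (φ : X₂ ≅ X₂') :
    (ShortComplex.mk (f ≫ φ.hom) (φ.inv ≫ g)
      (by rw [Category.assoc, Iso.hom_inv_id_assoc, w])).ShortExact := by
  refine ShortComplex.shortExact_of_iso (S₁ := ShortComplex.mk f g w) ?_ hse
  exact ShortComplex.isoMk (Iso.refl _) φ (Iso.refl _) (by simp) (by simp)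

/-- Add a biproduct summand to the quotient (and total) of a ses. -/
lemma ses_biprod_quot {X₁ X₂ X₃ : C} {f : X₁ ⟶ X₂} {g : X₂ ⟶ X₃} {w : f ≫ g = 0}
    (hse : (ShortComplex.mk f g w).ShortExact) (P : C) :
    (ShortComplex.mk (f ≫ biprod.inl) (biprod.map g (𝟙 P))
      (by rw [Category.assoc, biprod.inl_map, ← Category.assoc, w, zero_comp])).ShortExact := by
  have := hse.mono_f
  have := hse.epi_g
  have hepi : Epi (biprod.map g (𝟙 P)) := by
    apply Preadditive.epi_of_cancel_zero
    intro T t ht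
    have hA : g ≫ biprod.inl ≫ t = 0 := by
      rw [← biprod.inl_map_assoc g (𝟙 P) t, ht, comp_zero]
    have hB : biprod.inr ≫ t = 0 := by
      have : biprod.inr ≫ biprod.map g (𝟙 P) ≫ t = 0 := by rw [ht, comp_zero]
      rwa [biprod.inr_map_assoc, Category.id_comp] at this
    have hA' : biprod.inl ≫ t = 0 := zero_of_epi_comp g hA
    apply biprod.hom_ext' <;> simp [hA', hB]
  have : Mono (f ≫ (biprod.inl : X₂ ⟶ X₂ ⊞ P)) := mono_comp _ _
  apply shortExact_of_kernel
  intro A k hk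
  have h1 : (k ≫ biprod.fst) ≫ g = 0 := by
    have := hk =≫ biprod.fst
    simpa [biprod.map_fst] using this
  have h2 : k ≫ biprod.snd = 0 := by
    have := hk =≫ biprod.snd
    simpa [biprod.map_snd] using this
  obtain ⟨l, hl⟩ := sesLift hse (k ≫ biprod.fst) h1
  refine ⟨l, ?_⟩
  apply biprod.hom_ext
  · simpa using hl
  · simp [h2]

/-- Add a biproduct summand to the sub (and total) of a ses. -/
lemma ses_biprod_sub {X₁ X₂ X₃ : C} {f : X₁ ⟶ X₂} {g : X₂ ⟶ X₃} {w : f ≫ g = 0}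
    (hse : (ShortComplex.mk f g w).ShortExact) (P : C) :
    (ShortComplex.mk (biprod.map f (𝟙 P)) (biprod.fst ≫ g)
      (by
        apply biprod.hom_ext' <;>
          simp [reassoc_of% w, w])).ShortExact := by
  have := hse.mono_f
  have := hse.epi_g
  have : Mono (biprod.map f (𝟙 P)) := by
    apply Preadditive.mono_of_cancel_zero
    intro A t ht
    have h1 : t ≫ biprod.fst = 0 := by
      have := ht =≫ biprod.fst
      simp only [Category.assoc, biprod.map_fst, zero_comp] at this
      rw [← Category.assoc] at this
      exact zero_of_comp_mono f this
    have h2 : t ≫ biprod.snd = 0 := by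
      have := ht =≫ biprod.snd
      simpa [biprod.map_snd] using this
    apply biprod.hom_ext <;> simpa
  have : Epi ((biprod.fst : X₂ ⊞ P ⟶ X₂) ≫ g) := epi_comp _ _
  apply shortExact_of_kernel
  intro A k hk
  obtain ⟨l, hl⟩ := sesLift hse (k ≫ biprod.fst) (by rwa [Category.assoc])
  refine ⟨biprod.lift l (k ≫ biprod.snd), ?_⟩
  apply biprod.hom_ext <;> simp [hl]

/-- If the quotient of a ses is zero, the mono is an isomorphism. -/
lemma isIso_of_ses_zero_quot {X₁ X₂ X₃ : C} {f : X₁ ⟶ X₂} {g : X₂ ⟶ X₃} {w : f ≫ g = 0}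
    (hse : (ShortComplex.mk f g w).ShortExact) (h3 : IsZero X₃) : IsIso f := by
  have := hse.mono_f
  have : Epi f := by
    rw [epi_iff_surjective_up_to_refinements]
    intro A y
    exact hse.exact.exact_up_to_refinements y (h3.eq_of_tgt _ _)
  exact isIso_of_mono_of_epi f

end SESTools
section FiltDef

/-- Filtration: `A` has a filtration with smallest sub `G k`, successive quotients
`G (k-1), ..., G 1`, and top quotient `G 0`. -/
def Filt (G : ℕ → C) : ℕ → C → Prop
  | 0, A => Nonempty (A ≅ G 0)
  | k + 1, A => ∃ (A' : C) (f : G (k + 1) ⟶ A) (g : A ⟶ A') (w : f ≫ g = 0),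
      (ShortComplex.mk f g w).ShortExact ∧ Filt G k A'

lemma filt_congr {G G' : ℕ → C} {A : C} : ∀ {k : ℕ}, (∀ i, i ≤ k → G i = G' i) →
    Filt G k A → Filt G' k A := by
  intro k
  induction k generalizing A with
  | zero => intro h ⟨e⟩; exact ⟨e ≪≫ eqToIso (h 0 le_rfl)⟩
  | succ k ih =>
    rintro h ⟨A', f, g, w, hse, hF⟩
    refine ⟨A', eqToHom (h (k+1) le_rfl).symm ≫ f, g, by rw [Category.assoc, w, comp_zero],
      iso_comp_ses hse _, ih (fun i hi => h i (hi.trans (Nat.le_succ k))) hF⟩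

lemma filt_iso {G : ℕ → C} {A A' : C} {k : ℕ} (e : A' ≅ A) (hF : Filt G k A) :
    Filt G k A' := by
  cases k with
  | zero => obtain ⟨e'⟩ := hF; exact ⟨e ≪≫ e'⟩
  | succ k =>
    obtain ⟨B, f, g, w, hse, hF'⟩ := hF
    exact ⟨B, f ≫ e.symm.hom, e.symm.inv ≫ g,
      by rw [Category.assoc, Iso.symm_hom, Iso.symm_inv, Iso.inv_hom_id_assoc, w],
      ses_middle_iso hse e.symm, hF'⟩

end FiltDef

section Membership

open ZeroObject

/-- The short exact sequence `0 → X → X → 0 → 0`. -/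
lemma ses_to_zero (X : C) :
    (ShortComplex.mk (𝟙 X) (0 : X ⟶ 0) (by simp)).ShortExact := by
  have : Epi (0 : X ⟶ (0 : C)) := by
    apply Preadditive.epi_of_cancel_zero
    intro A t _
    exact (isZero_zero C).eq_of_src t 0
  exact shortExact_of_kernel _ _ _ (fun k _ => ⟨k, Category.comp_id k⟩)

lemma self_mem_bracket_one (T : C) : T ∈ bracket T 1 :=
  mem_addClosure_of_mem
    ⟨T, 0, mem_addClosure_of_mem rfl, isZero_zero C, 𝟙 T, 0, by simp, ses_to_zero T⟩

lemma mem_bracket_one_of_mem_addClosure {T X : C} (h : X ∈ addClosure {T}) :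
    X ∈ bracket T 1 := by
  refine addClosure_mono (Set.singleton_subset_iff.mpr ?_) h
  exact ⟨T, 0, mem_addClosure_of_mem rfl, isZero_zero C, 𝟙 T, 0, by simp, ses_to_zero T⟩

lemma bracket_one_subset_addClosure {T : C} : bracket T 1 ⊆ addClosure {T} := by
  apply addClosure_subset
  rintro X ⟨U, V, hU, hV, f, g, w, hse⟩
  have : IsIso f := isIso_of_ses_zero_quot hse hV
  exact iso_mem_addClosure (asIso f).symm hU

lemma bulletOp_mono {S S' T T' : Set C} (hS : S ⊆ S') (hT : T ⊆ T') :
    bulletOp S T ⊆ bulletOp S' T' := by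
  apply addClosure_mono
  rintro X ⟨U, V, hU, hV, f, g, w, hse⟩
  exact ⟨U, V, hS hU, hT hV, f, g, w, hse⟩

lemma mem_bulletOp_of_ses {S T : Set C} {U A V : C} {f : U ⟶ A} {g : A ⟶ V} {w : f ≫ g = 0}
    (hse : (ShortComplex.mk f g w).ShortExact) (hU : U ∈ S) (hV : V ∈ T) :
    A ∈ bulletOp S T :=
  mem_addClosure_of_mem ⟨U, V, hU, hV, f, g, w, hse⟩

lemma summand_mem_bigBullet {G : ℕ → C} {Y A : C} (k : ℕ) (s : Y ⟶ A) (p : A ⟶ Y)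
    (hsp : s ≫ p = 𝟙 Y) (hA : A ∈ bigBullet (fun i => bracket (G i) 1) k) :
    Y ∈ bigBullet (fun i => bracket (G i) 1) k := by
  cases k with
  | zero => exact summand_mem_addClosure s p hsp hA
  | succ k => exact summand_mem_addClosure s p hsp hA

lemma filt_mem_bigBullet {G : ℕ → C} {A : C} : ∀ {k : ℕ}, Filt G k A →
    A ∈ bigBullet (fun i => bracket (G i) 1) k := by
  intro k
  induction k generalizing A with
  | zero =>
    rintro ⟨e⟩
    exact mem_bracket_one_of_mem_addClosure (iso_mem_addClosure e (mem_addClosure_of_mem rfl))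
  | succ k ih =>
    rintro ⟨A', f, g, w, hse, hF⟩
    exact mem_bulletOp_of_ses hse (self_mem_bracket_one _) (ih hF)

lemma bigBullet_subset_bracket {G : ℕ → C} {T : C} :
    ∀ k : ℕ, (∀ i, i ≤ k → G i ∈ addClosure ({T} : Set C)) →
    bigBullet (fun i => bracket (G i) 1) k ⊆ bracket T (k + 1) := by
  intro k
  induction k with
  | zero =>
    intro h
    intro X hX
    exact mem_bracket_one_of_mem_addClosure
      (addClosure_subset (Set.singleton_subset_iff.mpr (h 0 le_rfl))
        (bracket_one_subset_addClosure hX))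
  | succ k ih =>
    intro h
    refine bulletOp_mono ?_ (ih (fun i hi => h i (hi.trans (Nat.le_succ k))))
    intro X hX
    exact addClosure_subset (Set.singleton_subset_iff.mpr (h (k+1) le_rfl))
      (bracket_one_subset_addClosure hX)

end Membership
section Homological

open ZeroObject

lemma sesDesc {X₁ X₂ X₃ : C} {f : X₁ ⟶ X₂} {g : X₂ ⟶ X₃} {w : f ≫ g = 0}
    (hse : (ShortComplex.mk f g w).ShortExact) {A : C} (k : X₂ ⟶ A) (hk : f ≫ k = 0) :
    ∃ l : X₃ ⟶ A, g ≫ l = k := by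
  obtain ⟨l, hl⟩ := CokernelCofork.IsColimit.desc' hse.gIsCokernel k hk
  exact ⟨l, hl⟩

lemma biprod_desc_eq {X Y Z : C} (a : X ⟶ Z) (b : Y ⟶ Z) :
    biprod.desc a b = biprod.fst ≫ a + biprod.snd ≫ b := by
  apply biprod.hom_ext' <;> simp

lemma comp_biprod_desc {W X Y Z : C} (x : W ⟶ X ⊞ Y) (a : X ⟶ Z) (b : Y ⟶ Z) :
    x ≫ biprod.desc a b = x ≫ biprod.fst ≫ a + x ≫ biprod.snd ≫ b := by
  rw [biprod_desc_eq, Preadditive.comp_add]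

/-- Noether-type lemma: from `0 → U → S → S' → 0` and `0 → S → D → T → 0` obtain
`D' = D/U` with `0 → U → D → D' → 0` and `0 → S' → D' → T → 0`. -/
lemma noether {U S S' D T : C} {a : U ⟶ S} {e : S ⟶ S'} {wa : a ≫ e = 0}
    (h1 : (ShortComplex.mk a e wa).ShortExact)
    {b : S ⟶ D} {dT : D ⟶ T} {wb : b ≫ dT = 0}
    (h2 : (ShortComplex.mk b dT wb).ShortExact) :
    ∃ (D' : C) (πD : D ⟶ D') (c : S' ⟶ D') (t : D' ⟶ T)
      (w2 : (a ≫ b) ≫ πD = 0) (wc : c ≫ t = 0),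
      (ShortComplex.mk (a ≫ b) πD w2).ShortExact ∧
      (ShortComplex.mk c t wc).ShortExact := by
  have := h1.mono_f
  have := h1.epi_g
  have := h2.mono_f
  have := h2.epi_g
  have hmab : Mono (a ≫ b) := mono_comp _ _
  refine ⟨cokernel (a ≫ b), cokernel.π (a ≫ b), ?_⟩
  have sesU : (ShortComplex.mk (a ≫ b) (cokernel.π (a ≫ b))
      (cokernel.condition _)).ShortExact :=
    ShortComplex.ShortExact.mk'
      ((ShortComplex.mk _ _ (cokernel.condition (a ≫ b))).exact_of_g_is_cokernel
        (cokernelIsCokernel _)) hmab inferInstance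
  obtain ⟨c, hc⟩ := sesDesc h1 (b ≫ cokernel.π (a ≫ b))
    (by rw [← Category.assoc]; exact cokernel.condition _)
  have ht0 : (a ≫ b) ≫ dT = 0 := by rw [Category.assoc, wb, comp_zero]
  refine ⟨c, cokernel.desc (a ≫ b) dT ht0, cokernel.condition _, ?_, sesU, ?_⟩
  · -- wc
    apply zero_of_epi_comp e
    rw [← Category.assoc, hc, Category.assoc, cokernel.π_desc, wb]
  · -- short exactness of (c, t)
    have hmc : Mono c := by
      apply Preadditive.mono_of_cancel_zero
      intro A x hx
      obtain ⟨A', ρ, hρ, y, hy⟩ := surjective_up_to_refinements_of_epi e x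
      have hyb : (y ≫ b) ≫ cokernel.π (a ≫ b) = 0 := by
        rw [Category.assoc, ← hc, ← Category.assoc, ← hy, Category.assoc, hx, comp_zero]
      obtain ⟨A'', ρ', hρ', z, hz⟩ := sesU.exact.exact_up_to_refinements (y ≫ b) hyb
      have hz' : ρ' ≫ y = z ≫ a := by
        dsimp only at hz
        have h4 : (ρ' ≫ y - z ≫ a) ≫ b = 0 := by
          rw [Preadditive.sub_comp, Category.assoc, hz]
          simp only [Category.assoc, sub_self]
        have h5 := zero_of_comp_mono b h4
        rwa [sub_eq_zero] at h5
      have : (ρ' ≫ ρ) ≫ x = 0 := by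
        rw [Category.assoc, hy, ← Category.assoc, hz', Category.assoc, wa, comp_zero]
      have hepi : Epi (ρ' ≫ ρ) := epi_comp _ _
      exact zero_of_epi_comp (ρ' ≫ ρ) this
    have het : Epi (cokernel.desc (a ≫ b) dT ht0) := by
      have h := cokernel.π_desc (a ≫ b) dT ht0
      have : Epi (cokernel.π (a ≫ b) ≫ cokernel.desc (a ≫ b) dT ht0) := by
        rw [h]; exact h2.epi_g
      exact epi_of_epi (cokernel.π (a ≫ b)) _
    refine ShortComplex.ShortExact.mk' ?_ hmc het
    rw [ShortComplex.exact_iff_exact_up_to_refinements]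
    intro A x₂ hx₂
    obtain ⟨A', ρ, hρ, y, hy⟩ := surjective_up_to_refinements_of_epi (cokernel.π (a ≫ b)) x₂
    have hyd : y ≫ dT = 0 := by
      have := hy =≫ cokernel.desc (a ≫ b) dT ht0
      simp only [Category.assoc, cokernel.π_desc] at this
      rw [← this, hx₂, comp_zero]
    obtain ⟨l, hl⟩ := sesLift h2 y hyd
    refine ⟨A', ρ, hρ, l ≫ e, ?_⟩
    dsimp only
    rw [Category.assoc, hc, ← Category.assoc, hl, hy]

/-- Absorb a projective summand of the quotient into the sub. -/
lemma absorb {B D V P : C} {β : B ⟶ D} {δ : D ⟶ V ⊞ P} {w : β ≫ δ = 0}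
    (hse : (ShortComplex.mk β δ w).ShortExact) [Projective P] :
    ∃ (m : B ⊞ P ⟶ D) (t : D ⟶ V) (w' : m ≫ t = 0),
      (ShortComplex.mk m t w').ShortExact := by
  have := hse.mono_f
  have := hse.epi_g
  let σ : P ⟶ D := Projective.factorThru biprod.inr δ
  have hσ : σ ≫ δ = biprod.inr := Projective.factorThru_comp _ _
  refine ⟨biprod.desc β σ, δ ≫ biprod.fst, ?_, ?_⟩
  · apply biprod.hom_ext'
    · rw [biprod.inl_desc_assoc, ← Category.assoc, w, zero_comp, comp_zero]
    · rw [biprod.inr_desc_assoc, ← Category.assoc, hσ, biprod.inr_fst, comp_zero]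
  · have hm : Mono (biprod.desc β σ) := by
      apply Preadditive.mono_of_cancel_zero
      intro A x hx
      have hsnd : x ≫ biprod.snd = 0 := by
        have h0 : (x ≫ biprod.desc β σ) ≫ δ = 0 := by rw [hx, zero_comp]
        rw [comp_biprod_desc, Preadditive.add_comp, Category.assoc, Category.assoc,
          Category.assoc, Category.assoc, w, comp_zero, comp_zero, zero_add,
          hσ] at h0
        rw [← Category.assoc] at h0
        exact zero_of_comp_mono biprod.inr h0
      have hfst : (x ≫ biprod.fst) ≫ β = 0 := by
        rw [comp_biprod_desc] at hx
        have h8 : x ≫ biprod.snd ≫ σ = 0 := by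
          have := hsnd =≫ σ
          simpa only [Category.assoc, zero_comp] using this
        rw [h8, add_zero] at hx
        rw [Category.assoc]
        exact hx
      have : x ≫ biprod.fst = 0 := zero_of_comp_mono β hfst
      apply biprod.hom_ext <;> simp [this, hsnd]
    have hepi : Epi (δ ≫ (biprod.fst : V ⊞ P ⟶ V)) := epi_comp _ _
    apply shortExact_of_kernel
    intro A k hk
    have hkd : (k ≫ δ ≫ biprod.snd) ≫ biprod.inr = k ≫ δ := by
      apply biprod.hom_ext
      · rw [Category.assoc, biprod.inr_fst, comp_zero, Category.assoc]
        exact hk.symm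
      · rw [Category.assoc, biprod.inr_snd, Category.comp_id, Category.assoc]
    have : (k - (k ≫ δ ≫ biprod.snd) ≫ σ) ≫ δ = 0 := by
      rw [Preadditive.sub_comp, Category.assoc, hσ, hkd, sub_self]
    obtain ⟨z, hz⟩ := sesLift hse _ this
    refine ⟨biprod.lift z (k ≫ δ ≫ biprod.snd), ?_⟩
    rw [biprod.lift_desc, hz]
    abel

/-- Pull back a short exact sequence. -/
lemma pullback_ses {Y Z Q K : C} (f : Y ⟶ Z) (q : Q ⟶ Z) {k : K ⟶ Q} {w : k ≫ q = 0}
    (hse : (ShortComplex.mk k q w).ShortExact) [Epi q] :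
    ∃ (k' : K ⟶ pullback f q) (w' : k' ≫ pullback.fst f q = 0),
      (ShortComplex.mk k' (pullback.fst f q) w').ShortExact ∧
      k' ≫ pullback.snd f q = k := by
  have := hse.mono_f
  let k' : K ⟶ pullback f q := pullback.lift 0 k (by rw [zero_comp, w])
  have hsnd : k' ≫ pullback.snd f q = k := pullback.lift_snd _ _ _
  have hfst : k' ≫ pullback.fst f q = 0 := pullback.lift_fst _ _ _
  have hmono : Mono k' := by
    have : Mono (k' ≫ pullback.snd f q) := by rw [hsnd]; infer_instance
    exact mono_of_mono k' (pullback.snd f q)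
  refine ⟨k', hfst, ?_, hsnd⟩
  apply shortExact_of_kernel
  intro A t ht
  have : (t ≫ pullback.snd f q) ≫ q = 0 := by
    rw [Category.assoc, ← pullback.condition, ← Category.assoc, ht, zero_comp]
  obtain ⟨l, hl⟩ := sesLift hse _ this
  refine ⟨l, ?_⟩
  apply pullback.hom_ext
  · rw [Category.assoc, hfst, comp_zero, ht]
  · rw [Category.assoc, hsnd, hl]

/-- The horseshoe construction, one step. -/
lemma horseshoe_step {G A A' H Qg B' Q' : C}
    {u : G ⟶ A} {v : A ⟶ A'} {wu : u ≫ v = 0} (hseA : (ShortComplex.mk u v wu).ShortExact)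
    {h₀ : H ⟶ Qg} {qg : Qg ⟶ G} {wg : h₀ ≫ qg = 0}
    (hseG : (ShortComplex.mk h₀ qg wg).ShortExact)
    {b₁ : B' ⟶ Q'} {q' : Q' ⟶ A'} {wq : b₁ ≫ q' = 0}
    (hseQ : (ShortComplex.mk b₁ q' wq).ShortExact)
    [Projective Q'] :
    ∃ (B : C) (bQ : B ⟶ Qg ⊞ Q') (qtot : Qg ⊞ Q' ⟶ A) (wB : bQ ≫ qtot = 0),
      (ShortComplex.mk bQ qtot wB).ShortExact ∧
      ∃ (h : H ⟶ B) (ρ : B ⟶ B') (wρ : h ≫ ρ = 0),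
        (ShortComplex.mk h ρ wρ).ShortExact := by
  have := hseA.mono_f
  have := hseA.epi_g
  have := hseG.mono_f
  have := hseG.epi_g
  have := hseQ.mono_f
  have := hseQ.epi_g
  let lam : Q' ⟶ A := Projective.factorThru q' v
  have hlam : lam ≫ v = q' := Projective.factorThru_comp _ _
  let qtot : Qg ⊞ Q' ⟶ A := biprod.desc (qg ≫ u) lam
  have hinlq : biprod.inl ≫ qtot = qg ≫ u := biprod.inl_desc _ _
  have hinrq : biprod.inr ≫ qtot = lam := biprod.inr_desc _ _
  have hepi : Epi qtot := by
    apply Preadditive.epi_of_cancel_zero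
    intro W t ht
    have h1 : (qg ≫ u) ≫ t = 0 := by
      rw [← hinlq, Category.assoc, ht, comp_zero]
    have h2 : u ≫ t = 0 := zero_of_epi_comp qg (by rwa [Category.assoc] at h1)
    obtain ⟨t', ht'⟩ := sesDesc hseA t h2
    have h3 : q' ≫ t' = 0 := by
      rw [← hlam, Category.assoc, ht', ← hinrq, Category.assoc, ht, comp_zero]
    have h4 : t' = 0 := zero_of_epi_comp q' h3
    rw [← ht', h4, comp_zero]
  let B := kernel qtot
  let bQ : B ⟶ Qg ⊞ Q' := kernel.ι qtot
  have sesB : (ShortComplex.mk bQ qtot (kernel.condition qtot)).ShortExact :=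
    ShortComplex.ShortExact.mk'
      ((ShortComplex.mk _ _ (kernel.condition qtot)).exact_of_f_is_kernel
        (kernelIsKernel qtot)) inferInstance hepi
  have hdecomp : ∀ {W : C} (x : W ⟶ Qg ⊞ Q'), x ≫ qtot =
      x ≫ biprod.fst ≫ (qg ≫ u) + x ≫ biprod.snd ≫ lam := fun x => comp_biprod_desc x _ _
  have hinl : h₀ ≫ biprod.inl ≫ qtot = 0 := by
    rw [biprod.inl_desc, ← Category.assoc, wg, zero_comp]
  let h : H ⟶ B := kernel.lift qtot (h₀ ≫ biprod.inl) (by rw [Category.assoc]; exact hinl)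
  have hh : h ≫ bQ = h₀ ≫ biprod.inl := kernel.lift_ι _ _ _
  have hsq : (bQ ≫ biprod.snd) ≫ q' = 0 := by
    have h0 : bQ ≫ biprod.fst ≫ (qg ≫ u) + bQ ≫ biprod.snd ≫ lam = 0 := by
      rw [← hdecomp bQ]; exact kernel.condition qtot
    have h1 := h0 =≫ v
    rw [Preadditive.add_comp, zero_comp] at h1
    have h2 : (bQ ≫ biprod.fst ≫ (qg ≫ u)) ≫ v = 0 := by
      simp only [Category.assoc, wu, comp_zero]
    rw [h2, zero_add] at h1
    rw [← hlam]
    simpa only [Category.assoc] using h1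
  obtain ⟨ρ, hρ⟩ := sesLift hseQ (bQ ≫ biprod.snd) hsq
  have wρ : h ≫ ρ = 0 := by
    have hzz : (h ≫ ρ) ≫ b₁ = 0 := by
      rw [Category.assoc, hρ, ← Category.assoc, hh, Category.assoc, biprod.inl_snd, comp_zero]
    exact zero_of_comp_mono b₁ hzz
  refine ⟨B, bQ, qtot, kernel.condition qtot, sesB, h, ρ, wρ, ?_⟩
  have hmh : Mono h := by
    have : Mono (h ≫ bQ) := by rw [hh]; exact mono_comp _ _
    exact mono_of_mono h bQ
  have heρ : Epi ρ := by
    rw [epi_iff_surjective_up_to_refinements]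
    intro A₀ x
    have hxv : (x ≫ b₁ ≫ lam) ≫ v = 0 := by
      simp only [Category.assoc, hlam]
      rw [wq, comp_zero]
    obtain ⟨z, hz⟩ := sesLift hseA (x ≫ b₁ ≫ lam) hxv
    obtain ⟨A₁, ρ₀, hρ₀, wmap, hwmap⟩ := surjective_up_to_refinements_of_epi qg z
    have hY : (biprod.lift (-wmap) (ρ₀ ≫ x ≫ b₁)) ≫ qtot = 0 := by
      rw [hdecomp]
      rw [biprod.lift_fst_assoc, biprod.lift_snd_assoc]
      simp only [Preadditive.neg_comp, Category.assoc]
      rw [← hz, ← Category.assoc ρ₀ z u, hwmap, Category.assoc]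
      exact neg_add_cancel _
    obtain ⟨β, hβ⟩ := sesLift sesB _ hY
    refine ⟨A₁, ρ₀, hρ₀, β, ?_⟩
    have hcan : (β ≫ ρ) ≫ b₁ = (ρ₀ ≫ x) ≫ b₁ := by
      rw [Category.assoc, hρ, ← Category.assoc, hβ, biprod.lift_snd]
      simp only [Category.assoc]
    exact ((cancel_mono b₁).1 hcan).symm
  refine ShortComplex.ShortExact.mk' ?_ hmh heρ
  rw [ShortComplex.exact_iff_exact_up_to_refinements]
  intro A₀ x₂ hx₂
  dsimp only at hx₂ ⊢
  have hxsnd : x₂ ≫ bQ ≫ biprod.snd = 0 := by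
    rw [← hρ, ← Category.assoc, hx₂, zero_comp]
  have hw1 : (x₂ ≫ bQ ≫ biprod.fst) ≫ qg = 0 := by
    have h7 : x₂ ≫ bQ ≫ biprod.fst ≫ (qg ≫ u) + x₂ ≫ bQ ≫ biprod.snd ≫ lam = 0 := by
      have := hdecomp (x₂ ≫ bQ)
      simp only [Category.assoc] at this
      rw [← this]
      rw [← Category.assoc, Category.assoc, kernel.condition, comp_zero]
    have h8 : x₂ ≫ bQ ≫ biprod.snd ≫ lam = 0 := by
      have := hxsnd =≫ lam
      simpa only [Category.assoc, zero_comp] using this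
    rw [h8, add_zero] at h7
    have h9 : ((x₂ ≫ bQ ≫ biprod.fst) ≫ qg) ≫ u = 0 := by
      simpa only [Category.assoc] using h7
    exact zero_of_comp_mono u h9
  obtain ⟨z, hz⟩ := sesLift hseG _ hw1
  refine ⟨A₀, 𝟙 A₀, inferInstance, z, ?_⟩
  have : (z ≫ h) ≫ bQ = x₂ ≫ bQ := by
    rw [Category.assoc, hh, ← Category.assoc, hz]
    apply biprod.hom_ext
    · simp only [Category.assoc, biprod.inl_fst, Category.comp_id]
    · simp only [Category.assoc, biprod.inl_snd, comp_zero]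
      exact hxsnd.symm
  have hfin : z ≫ h = x₂ := by
    have hmbQ : Mono bQ := sesB.mono_f
    exact (cancel_mono bQ).1 this
  rw [Category.id_comp, hfin]

lemma ses_split_iso {M D Q : C} {f : M ⟶ D} {g : D ⟶ Q} {w : f ≫ g = 0}
    (hse : (ShortComplex.mk f g w).ShortExact) [Projective Q] :
    Nonempty (D ≅ M ⊞ Q) :=
  ⟨(hse.splittingOfProjective).isoBinaryBiproduct⟩

lemma horseshoe_filt {G H Qf : ℕ → C} {ι : ∀ i, H i ⟶ Qf i} {q : ∀ i, Qf i ⟶ G i} :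
    ∀ (k : ℕ) {A : C}, Filt G k A →
      (∀ i, i ≤ k → Projective (Qf i)) →
      (∀ i, i ≤ k → ∃ w : ι i ≫ q i = 0, (ShortComplex.mk (ι i) (q i) w).ShortExact) →
      ∃ (B Qt : C) (b : B ⟶ Qt) (e : Qt ⟶ A) (w : b ≫ e = 0),
        Projective Qt ∧ (ShortComplex.mk b e w).ShortExact ∧ Filt H k B := by
  intro k
  induction k with
  | zero =>
    intro A hF hQ hses
    obtain ⟨φ⟩ := hF
    obtain ⟨w0, hse0⟩ := hses 0 le_rfl
    refine ⟨H 0, Qf 0, ι 0, q 0 ≫ φ.inv, ?_, hQ 0 le_rfl, ?_, ⟨Iso.refl _⟩⟩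
    · rw [← Category.assoc, w0, zero_comp]
    · exact ses_comp_iso hse0 φ.inv
  | succ k ih =>
    intro A hF hQ hses
    obtain ⟨A₁, u, v, wu, hseA, hF1⟩ := hF
    obtain ⟨B₁, Q₁, b₁, e₁, w₁, hQ₁, hse₁, hFB₁⟩ :=
      ih hF1 (fun i hi => hQ i (hi.trans (Nat.le_succ k)))
        (fun i hi => hses i (hi.trans (Nat.le_succ k)))
    obtain ⟨wk, hsek⟩ := hses (k + 1) le_rfl
    have : Projective Q₁ := hQ₁
    have : Projective (Qf (k + 1)) := hQ (k + 1) le_rfl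
    obtain ⟨B, bQ, qtot, wB, sesB, h, ρ, wρ, hseh⟩ := horseshoe_step hseA hsek hse₁
    exact ⟨B, Qf (k + 1) ⊞ Q₁, bQ, qtot, wB, inferInstance, sesB, B₁, h, ρ, wρ, hseh, hFB₁⟩

lemma filt_glue {G' G : ℕ → C} :
    ∀ (k : ℕ) {S D T : C} {b : S ⟶ D} {dT : D ⟶ T} {w : b ≫ dT = 0},
      (ShortComplex.mk b dT w).ShortExact → Filt G' k S →
      (∀ i, i ≤ k → G (i + 1) = G' i) → G 0 = T → Filt G (k + 1) D := by
  intro k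
  induction k with
  | zero =>
    intro S D T b dT w hse hF hG hG0
    obtain ⟨φ⟩ := hF
    refine ⟨T, eqToHom (hG 0 le_rfl) ≫ φ.inv ≫ b, dT, ?_, ?_, ⟨eqToIso hG0.symm⟩⟩
    · simp only [Category.assoc, w, comp_zero]
    · have h1 := iso_comp_ses hse φ.inv
      exact iso_comp_ses h1 (eqToHom (hG 0 le_rfl))
  | succ k ih =>
    intro S D T b dT w hse hF hG hG0
    obtain ⟨S₁, a, e, wa, hse1, hF1⟩ := hF
    obtain ⟨D₁, πD, c, t, w2, wc, sesab, sesct⟩ := noether hse1 hse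
    have hFD₁ : Filt G (k + 1) D₁ :=
      ih sesct hF1 (fun i hi => hG i (hi.trans (Nat.le_succ k))) hG0
    refine ⟨D₁, eqToHom (hG (k + 1) le_rfl) ≫ (a ≫ b), πD, ?_, ?_, hFD₁⟩
    · rw [Category.assoc, w2, comp_zero]
    · exact iso_comp_ses sesab (eqToHom (hG (k + 1) le_rfl))

lemma filt_add_biprod_top {Hf H' : ℕ → C} {P : C} :
    ∀ (k : ℕ) {B : C}, Filt Hf k B → (H' k = (Hf k ⊞ P)) → (∀ i, i < k → H' i = Hf i) →
      Filt H' k (B ⊞ P) := by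
  intro k
  induction k with
  | zero =>
    intro B hF htop _
    obtain ⟨φ⟩ := hF
    exact ⟨(biprod.mapIso φ (Iso.refl P)) ≪≫ eqToIso htop.symm⟩
  | succ k ih =>
    intro B hF htop hlow
    obtain ⟨B₁, f, g, wf, hse, hF1⟩ := hF
    have hse2 := ses_biprod_sub hse P
    have hF1' : Filt H' k B₁ :=
      filt_congr (fun i hi => (hlow i (Nat.lt_succ_of_le hi)).symm) hF1
    have w' : biprod.map f (𝟙 P) ≫ biprod.fst ≫ g = 0 := by
      rw [biprod.map_fst_assoc, wf, comp_zero]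
    refine ⟨B₁, eqToHom htop ≫ biprod.map f (𝟙 P), biprod.fst ≫ g, ?_, ?_, hF1'⟩
    · rw [Category.assoc, w']
      rw [comp_zero]
    · exact iso_comp_ses hse2 (eqToHom htop)

lemma pullback_ses_snd {Y Z Q K : C} (f : Y ⟶ Z) (q : Q ⟶ Z) {k : K ⟶ Y} {w : k ≫ f = 0}
    (hse : (ShortComplex.mk k f w).ShortExact) [Epi f] :
    ∃ (k' : K ⟶ pullback f q) (w' : k' ≫ pullback.snd f q = 0),
      (ShortComplex.mk k' (pullback.snd f q) w').ShortExact ∧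
      k' ≫ pullback.fst f q = k := by
  have := hse.mono_f
  let k' : K ⟶ pullback f q := pullback.lift k 0 (by rw [w, zero_comp])
  have hfst : k' ≫ pullback.fst f q = k := pullback.lift_fst _ _ _
  have hsnd : k' ≫ pullback.snd f q = 0 := pullback.lift_snd _ _ _
  have hmono : Mono k' := by
    have : Mono (k' ≫ pullback.fst f q) := by rw [hfst]; infer_instance
    exact mono_of_mono k' (pullback.fst f q)
  refine ⟨k', hsnd, ?_, hfst⟩
  apply shortExact_of_kernel
  intro A t ht
  have h0 : (t ≫ pullback.fst f q) ≫ f = 0 := by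
    rw [Category.assoc, pullback.condition, ← Category.assoc, ht, zero_comp]
  obtain ⟨l, hl⟩ := sesLift hse _ h0
  refine ⟨l, ?_⟩
  apply pullback.hom_ext
  · rw [Category.assoc, hfst, hl]
  · rw [Category.assoc, hsnd, comp_zero, ht]

end Homological
section CoreLemma

open ZeroObject

def biprod_zero_iso (M : C) : M ⊞ (0 : C) ≅ M where
  hom := biprod.fst
  inv := biprod.lift (𝟙 M) 0
  hom_inv_id := by
    apply biprod.hom_ext
    · simp
    · exact (isZero_zero C).eq_of_tgt _ _
  inv_hom_id := by simp

lemma exact_of_epi_precomp {X₀ X₁ X₂ X₃ : C} {p : X₀ ⟶ X₁} {a : X₁ ⟶ X₂} {h : X₂ ⟶ X₃}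
    [Epi p] {w : (p ≫ a) ≫ h = 0} (hex : (ShortComplex.mk (p ≫ a) h w).Exact) :
    ∃ w' : a ≫ h = 0, (ShortComplex.mk a h w').Exact := by
  have w' : a ≫ h = 0 := by
    have h0 : p ≫ a ≫ h = 0 := by rwa [← Category.assoc]
    exact zero_of_epi_comp p h0
  refine ⟨w', ?_⟩
  rw [ShortComplex.exact_iff_exact_up_to_refinements] at hex ⊢
  intro A x hx
  obtain ⟨A', ρ, hρ, y, hy⟩ := hex x hx
  dsimp only at hy ⊢
  exact ⟨A', ρ, hρ, y ≫ p, by rw [Category.assoc]; exact hy⟩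

lemma core [EnoughProjectives C] :
    ∀ (n : ℕ) (M : C) (Y : ℕ → C) (f : ∀ k, Y (k + 1) ⟶ Y k) (g : M ⟶ Y n),
      Mono g →
      (n = 0 → Epi g) →
      (0 < n → Epi (f 0)) →
      (∀ m (hm : n = m + 1), ∃ w : (g ≫ eqToHom (congrArg Y hm)) ≫ f m = 0,
        (ShortComplex.mk (g ≫ eqToHom (congrArg Y hm)) (f m) w).Exact) →
      (∀ i, i + 2 ≤ n → ∃ w : f (i + 1) ≫ f i = 0,
        (ShortComplex.mk (f (i + 1)) (f i) w).Exact) →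
      ∃ Ω : ℕ → C, (∀ i, i ≤ n → IsNthSyzygy i (Ω i) (Y (n - i))) ∧
        ∃ (A P : C), Projective P ∧ Filt Ω n A ∧ Nonempty (A ≅ M ⊞ P) := by
  intro n
  induction n with
  | zero =>
    intro M Y f g hmono hepi0 _ _ _
    have : Epi g := hepi0 rfl
    have : IsIso g := isIso_of_mono_of_epi g
    refine ⟨fun _ => Y 0, ?_, Y 0, 0, (inferInstance : Projective (0 : C)), ⟨Iso.refl _⟩,
      ⟨(asIso g).symm ≪≫ (biprod_zero_iso M).symm⟩⟩
    intro i hi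
    obtain rfl : i = 0 := Nat.le_zero.mp hi
    rfl
  | succ n ih =>
    intro M Y f g hmono hepi0 hepif h4 h5
    obtain ⟨wn, hexn⟩ := h4 n rfl
    have wn' : g ≫ f n = 0 := by simpa using wn
    have hexn' : (ShortComplex.mk g (f n) wn').Exact := by
      refine ShortComplex.exact_of_iso ?_ hexn
      exact ShortComplex.isoMk (Iso.refl _) (Iso.refl _) (Iso.refl _) (by simp) (by simp)
    let π : Y (n + 1) ⟶ cokernel g := cokernel.π g
    let g' : cokernel g ⟶ Y n := cokernel.desc g (f n) wn'
    have hπg' : π ≫ g' = f n := cokernel.π_desc _ _ _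
    have hepiπ : Epi π := inferInstance
    have sesM : (ShortComplex.mk g π (cokernel.condition g)).ShortExact :=
      ShortComplex.ShortExact.mk'
        ((ShortComplex.mk g π (cokernel.condition g)).exact_of_g_is_cokernel
          (cokernelIsCokernel g)) hmono hepiπ
    have hmono' : Mono g' := by
      apply Preadditive.mono_of_cancel_zero
      intro A x hx
      obtain ⟨A', ρ, hρ, y, hy⟩ := surjective_up_to_refinements_of_epi π x
      have hyf : y ≫ f n = 0 := by
        rw [← hπg', ← Category.assoc, ← hy, Category.assoc, hx, comp_zero]
      obtain ⟨A'', ρ', hρ', z, hz⟩ := hexn'.exact_up_to_refinements y hyf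
      dsimp only at hz
      have hzz : (ρ' ≫ ρ) ≫ x = 0 := by
        rw [Category.assoc, hy, ← Category.assoc, hz, Category.assoc,
          cokernel.condition, comp_zero]
      have : Epi (ρ' ≫ ρ) := epi_comp _ _
      exact zero_of_epi_comp (ρ' ≫ ρ) hzz
    have h2' : n = 0 → Epi g' := by
      intro hn
      subst hn
      have : Epi (π ≫ g') := by rw [hπg']; exact hepif (by omega)
      exact epi_of_epi π g'
    have h4' : ∀ m (hm : n = m + 1), ∃ w : (g' ≫ eqToHom (congrArg Y hm)) ≫ f m = 0,
        (ShortComplex.mk (g' ≫ eqToHom (congrArg Y hm)) (f m) w).Exact := by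
      intro m hm
      subst hm
      simp only [eqToHom_refl, Category.comp_id]
      obtain ⟨w, hex⟩ := h5 m le_rfl
      have w' : g' ≫ f m = 0 := by
        apply zero_of_epi_comp π
        rw [← Category.assoc, hπg']
        exact w
      refine ⟨w', ?_⟩
      rw [ShortComplex.exact_iff_exact_up_to_refinements]
      intro A x hx
      obtain ⟨A', ρ, hρ, y, hy⟩ := hex.exact_up_to_refinements x hx
      dsimp only at hy ⊢
      rw [← hπg'] at hy
      exact ⟨A', ρ, hρ, y ≫ π, by rw [Category.assoc]; exact hy⟩
    obtain ⟨Ω', hsyz', A', P', hP', hFiltA', ⟨isoA'⟩⟩ :=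
      ih (cokernel g) Y f g' hmono' h2' (fun _ => hepif (by omega)) h4'
        (fun i hi => h5 i (by omega))
    -- syzygies of Ω' i
    let Qf : ℕ → C := fun i => Projective.over (Ω' i)
    let q : ∀ i, Qf i ⟶ Ω' i := fun i => Projective.π (Ω' i)
    let H : ℕ → C := fun i => kernel (q i)
    let ι : ∀ i, H i ⟶ Qf i := fun i => kernel.ι (q i)
    have hses : ∀ i, ∃ w : ι i ≫ q i = 0, (ShortComplex.mk (ι i) (q i) w).ShortExact :=
      fun i => ⟨kernel.condition _, ShortComplex.ShortExact.mk'
        ((ShortComplex.mk _ _ (kernel.condition (q i))).exact_of_f_is_kernel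
          (kernelIsKernel _)) inferInstance inferInstance⟩
    obtain ⟨B, Qt, bB, eB, wB, hQt, hseB, hFiltB⟩ :=
      horseshoe_filt (G := Ω') (H := H) (Qf := Qf) (ι := ι) (q := q) n hFiltA'
        (fun i _ => Projective.projective_over _) (fun i _ => hses i)
    have := hseB.epi_g
    -- the epi  Y (n+1) ⊞ P' ⟶ A'
    have hP'i : Projective P' := hP'
    have sesME := ses_comp_iso (ses_biprod_quot sesM P') isoA'.inv
    -- sesME : ShortExact (mk (g ≫ biprod.inl) (biprod.map π (𝟙 P') ≫ isoA'.inv) _)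
    have := sesME.epi_g
    let e : Y (n + 1) ⊞ P' ⟶ A' := biprod.map π (𝟙 P') ≫ isoA'.inv
    -- pullback
    obtain ⟨kB, wkB, sesA, hcompat⟩ := pullback_ses e eB hseB
    obtain ⟨kM, wkM, sesMD, hcompat2⟩ := pullback_ses_snd e eB sesME
    obtain ⟨isoD⟩ := ses_split_iso sesMD
    obtain ⟨mm, tt, wmt, sesAbs⟩ := absorb sesA
    let H'' : ℕ → C := fun i => if i = n then (H n ⊞ P') else H i
    have hFiltBP : Filt H'' n (B ⊞ P') :=
      filt_add_biprod_top n hFiltB (if_pos rfl) (fun i hi => if_neg (by omega))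
    let Ω : ℕ → C := fun i => match i with
      | 0 => Y (n + 1)
      | j + 1 => H'' j
    have hFiltD : Filt Ω (n + 1) (pullback e eB) :=
      filt_glue (G' := H'') (G := Ω) n sesAbs hFiltBP (fun i _ => rfl) rfl
    refine ⟨Ω, ?_, pullback e eB, Qt, hQt, hFiltD, ⟨isoD⟩⟩
    intro i hi
    cases i with
    | zero => rfl
    | succ j =>
      have hj : j ≤ n := by omega
      have hsub : n + 1 - (j + 1) = n - j := by omega
      rw [hsub]
      refine ⟨Ω' j, hsyz' j hj, ?_⟩
      show IsSyzygy (H'' j) (Ω' j)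
      by_cases hjn : j = n
      · subst hjn
        rw [show H'' j = (H j ⊞ P') from if_pos rfl]
        obtain ⟨w0, hse0⟩ := hses j
        have := ses_biprod_sub hse0 P'
        exact ⟨Qf j ⊞ P', biprod.map (ι j) (𝟙 P'), biprod.fst ≫ q j, _,
          inferInstance, this⟩
      · rw [show H'' j = H j from if_neg hjn]
        obtain ⟨w0, hse0⟩ := hses j
        exact ⟨Qf j, ι j, q j, w0, Projective.projective_over _, hse0⟩

end CoreLemma

/-- Let `𝒜` be an abelian category with enough projectives and let
`0 → M → X⁰ → X¹ → ⋯ → Xⁿ → 0` be exact (`n ≥ 0`).  Then there are, for `0 ≤ i ≤ n`,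
`i`-th syzygies `Ω^i(X^i)` of the `X^i` such that
`M ∈ [Ωⁿ(Xⁿ)]₁ • [Ω^{n-1}(X^{n-1})]₁ • ⋯ • [Ω¹(X¹)]₁ • [X⁰]₁
   ⊆ [⊕_{i=0}^{n} Ω^i(X^i)]_{n+1}`. -/
theorem mem_bigBullet_of_exactSeq [EnoughProjectives C]
    (n : ℕ) (M : C) (X : ℕ → C)
    (d : ∀ k : ℕ, (fun j => if j ≤ n then X (n - j) else M) (k + 1) ⟶
      (fun j => if j ≤ n then X (n - j) else M) k)
    (h : IsExactSeq (n + 1) (fun j => if j ≤ n then X (n - j) else M) d) :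
    ∃ Ω : ℕ → C, (∀ i : ℕ, i ≤ n → IsNthSyzygy i (Ω i) (X i)) ∧
      M ∈ bigBullet (fun i => bracket (Ω i) 1) n ∧
      bigBullet (fun i => bracket (Ω i) 1) n ⊆
        bracket (⨁ (fun i : Fin (n + 1) => Ω i)) (n + 1) := by
  obtain ⟨hmono, hepi, hmid⟩ := h
  have hmono' : Mono (d n) := by simpa using hmono
  have hM : (if n + 1 ≤ n then X (n - (n + 1)) else M) = M := if_neg (by omega)
  let Z : ℕ → C := fun j => if j ≤ n then X (n - j) else M
  let g : M ⟶ Z n := eqToHom hM.symm ≫ d n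
  have hg : Mono g := mono_comp _ _
  have h2 : n = 0 → Epi g := by
    intro hn
    subst hn
    exact epi_comp _ _
  have h4 : ∀ m (hm : n = m + 1), ∃ w : (g ≫ eqToHom (congrArg Z hm)) ≫ d m = 0,
      (ShortComplex.mk (g ≫ eqToHom (congrArg Z hm)) (d m) w).Exact := by
    intro m hm
    subst hm
    simp only [eqToHom_refl, Category.comp_id]
    obtain ⟨w, hex⟩ := hmid m (by omega)
    have w' : g ≫ d m = 0 := by
      show (eqToHom hM.symm ≫ d (m + 1)) ≫ d m = 0
      rw [Category.assoc, w, comp_zero]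
    refine ⟨w', ?_⟩
    refine ShortComplex.exact_of_iso ?_ hex
    refine ShortComplex.isoMk (eqToIso hM) (Iso.refl _) (Iso.refl _) ?_ ?_
    · show eqToHom hM ≫ (eqToHom hM.symm ≫ d (m + 1)) = d (m + 1) ≫ 𝟙 _
      simp
    · simp
  obtain ⟨Ω, hsyz, A, P, hP, hFilt, ⟨isoA⟩⟩ :=
    core n M Z d g hg h2 (fun _ => hepi) h4 (fun i hi => hmid i (by omega))
  refine ⟨Ω, ?_, ?_, ?_⟩
  · intro i hi
    have hzi : Z (n - i) = X i := by
      show (if n - i ≤ n then X (n - (n - i)) else M) = X i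
      rw [if_pos (Nat.sub_le n i)]
      congr 1
      omega
    have := hsyz i hi
    rwa [hzi] at this
  · have hmem := filt_mem_bigBullet hFilt
    exact summand_mem_bigBullet n (biprod.inl ≫ isoA.inv) (isoA.hom ≫ biprod.fst)
      (by simp) hmem
  · apply bigBullet_subset_bracket
    intro i hi
    refine summand_mem_addClosure (biproduct.ι (fun i : Fin (n + 1) => Ω i) ⟨i, by omega⟩)
      (biproduct.π (fun i : Fin (n + 1) => Ω i) ⟨i, by omega⟩) ?_
      (mem_addClosure_of_mem rfl)
    simp
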